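/- arXiv:2508.14816 — 2 statements merged into one kernel-verified Lean document; each statement's English description precedes it below -/
import Mathlib

section
/- Consider a sequence of ScBMs indexed by n satisfying Assumptions A1–A3. Suppose the estimated labels ĝ^s (into K_{s0} ≤ K_s communities) and ĝ^r (into K_{r0} ≤ K_r communities) are such that every estimated sender community and every estimated receiver community has size at least c₀ n / K_max. Then with probability at least 1 − o(n^{−1}), all entries of the estimated expected adjacency matrix satisfy Ω̂(i,j) ∈ [δ/2, 1 − δ/2] for all i ≠ j. -/
open MeasureTheory ProbabilityTheory Filter Finset
open scoped ENNReal Classical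

/-- Spectral norm (largest singular value) of a real rectangular matrix. -/
noncomputable def specNorm {p q : ℕ} (M : Matrix (Fin p) (Fin q) ℝ) : ℝ :=
  ‖LinearMap.toContinuousLinearMap (Matrix.toEuclideanLin M)‖

/-- Frobenius norm of a real rectangular matrix. -/
noncomputable def frobNorm {p q : ℕ} (M : Matrix (Fin p) (Fin q) ℝ) : ℝ :=
  Real.sqrt (∑ i, ∑ j, (M i j) ^ 2)

/-- Community separation δ_n of a block probability matrix. -/
noncomputable def sep {Ks Kr : ℕ} (B : Matrix (Fin Ks) (Fin Kr) ℝ) : ℝ :=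
  min (sInf {x | ∃ k k' : Fin Ks, k ≠ k' ∧ x = ⨆ l, |B k l - B k' l|})
      (sInf {x | ∃ l l' : Fin Kr, l ≠ l' ∧ x = ⨆ k, |B k l - B k l'|})

/-- Size of the community `k` under labels `g`. -/
def commSize {n K : ℕ} (g : Fin n → Fin K) (k : Fin K) : ℕ :=
  (Finset.univ.filter fun i => g i = k).card

/-- Expected adjacency matrix of a ScBM (zero diagonal). -/
noncomputable def Omega0 {n Ks Kr : ℕ} (B : Matrix (Fin Ks) (Fin Kr) ℝ)
    (gs : Fin n → Fin Ks) (gr : Fin n → Fin Kr) : Matrix (Fin n) (Fin n) ℝ :=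
  Matrix.of fun i j => if i = j then 0 else B (gs i) (gr j)

/-- Normalized residual matrix of `A` with respect to a matrix `Om` of edge
probabilities (zero diagonal). -/
noncomputable def resid {n : ℕ} (A Om : Matrix (Fin n) (Fin n) ℝ) :
    Matrix (Fin n) (Fin n) ℝ :=
  Matrix.of fun i j => if i = j then 0 else
    (A i j - Om i j) / Real.sqrt (((n : ℝ) - 1) * Om i j * (1 - Om i j))

/-- Plug-in estimator of the block probability matrix. -/
noncomputable def Bhat {n Ks0 Kr0 : ℕ} (A : Matrix (Fin n) (Fin n) ℝ)
    (es : Fin n → Fin Ks0) (er : Fin n → Fin Kr0) : Matrix (Fin Ks0) (Fin Kr0) ℝ :=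
  Matrix.of fun k l =>
    (∑ i ∈ Finset.univ.filter (fun i => es i = k),
      ∑ j ∈ Finset.univ.filter (fun j => er j = l), A i j)
    / ((commSize es k : ℝ) * (commSize er l : ℝ))

/-- Estimated expected adjacency matrix (zero diagonal). -/
noncomputable def OmegaHat {n Ks0 Kr0 : ℕ} (A : Matrix (Fin n) (Fin n) ℝ)
    (es : Fin n → Fin Ks0) (er : Fin n → Fin Kr0) : Matrix (Fin n) (Fin n) ℝ :=
  Matrix.of fun i j => if i = j then 0 else Bhat A es er (es i) (er j)

/-- The test statistic `T̂ = σ₁(R̂) − 2` built from estimated labels. -/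
noncomputable def That {n Ks0 Kr0 : ℕ} (A : Matrix (Fin n) (Fin n) ℝ)
    (es : Fin n → Fin Ks0) (er : Fin n → Fin Kr0) : ℝ :=
  specNorm (resid A (OmegaHat A es er)) - 2


section OmegaHatAux

lemma exp_le_quad {x : ℝ} (h : |x| ≤ 1) : Real.exp x ≤ 1 + x + x ^ 2 := by
  have h2 := Real.exp_bound h (n := 2) (by norm_num)
  simp only [Finset.sum_range_succ, Finset.sum_range_zero] at h2
  norm_num at h2
  rw [abs_le] at h2
  nlinarith [h2.2, sq_nonneg x, sq_abs x]

lemma factor_bound {c m : ℝ} (hc : |c| ≤ 1) (hm0 : 0 ≤ m) (hm1 : m ≤ 1) :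
    Real.exp (-(c * m)) * (1 + (Real.exp c - 1) * m) ≤ Real.exp (c ^ 2) := by
  have hc1 : |(-(c * m))| ≤ 1 := by
    rw [abs_neg, abs_mul]
    calc |c| * |m| ≤ 1 * 1 := by
          apply mul_le_mul hc (by rwa [abs_of_nonneg hm0]) (abs_nonneg _) zero_le_one
      _ = 1 := by ring
  have hc2 : |c * (1 - m)| ≤ 1 := by
    rw [abs_mul]
    calc |c| * |1 - m| ≤ 1 * 1 := by
          apply mul_le_mul hc (by rw [abs_of_nonneg (by linarith)]; linarith)
            (abs_nonneg _) zero_le_one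
      _ = 1 := by ring
  have key : Real.exp (-(c * m)) * (1 + (Real.exp c - 1) * m)
      = (1 - m) * Real.exp (-(c*m)) + m * Real.exp (c * (1 - m)) := by
    have : Real.exp (c * (1 - m)) = Real.exp c * Real.exp (-(c*m)) := by
      rw [← Real.exp_add]; ring_nf
    rw [this]; ring
  rw [key]
  have e1 := exp_le_quad hc1
  have e2 := exp_le_quad hc2
  have : (1 - m) * Real.exp (-(c*m)) + m * Real.exp (c * (1 - m))
      ≤ (1 - m) * (1 + (-(c*m)) + (-(c*m))^2) + m * (1 + c*(1-m) + (c*(1-m))^2) := by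
    apply add_le_add
    · exact mul_le_mul_of_nonneg_left e1 (by linarith)
    · exact mul_le_mul_of_nonneg_left e2 hm0
  refine this.trans ?_
  have expand : (1 - m) * (1 + (-(c*m)) + (-(c*m))^2) + m * (1 + c*(1-m) + (c*(1-m))^2)
      = 1 + c^2 * (m * (1-m)) := by ring
  rw [expand]
  have h4 : c^2 * (m * (1-m)) ≤ c^2 := by
    nlinarith [sq_nonneg c]
  calc 1 + c^2 * (m*(1-m)) ≤ 1 + c^2 := by linarith
    _ ≤ Real.exp (c^2) := by linarith [Real.add_one_le_exp (c^2)]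

lemma two_point_integral {Ω : Type} [MeasurableSpace Ω] (μ : Measure Ω)
    [IsProbabilityMeasure μ] {X : Ω → ℝ} (hmeas : Measurable X)
    (hX : ∀ ω, X ω = 0 ∨ X ω = 1) (c : ℝ) :
    Integrable (fun ω => Real.exp (c * X ω)) μ ∧
    ∫ ω, Real.exp (c * X ω) ∂μ
      = 1 + (Real.exp c - 1) * (μ {ω | X ω = 1}).toReal := by
  have hset : MeasurableSet {ω | X ω = 1} := hmeas (measurableSet_singleton 1)
  have hXind : X = Set.indicator {ω | X ω = 1} (fun _ => (1:ℝ)) := by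
    funext ω
    rcases hX ω with h | h
    · have : ω ∉ {ω | X ω = 1} := by simp [h]
      simp [Set.indicator_of_notMem this, h]
    · have : ω ∈ {ω | X ω = 1} := h
      simp [Set.indicator_of_mem this, h]
  have hXint : Integrable X μ := by
    rw [hXind]; exact (integrable_const (1:ℝ)).indicator hset
  have hfun : (fun ω => Real.exp (c * X ω)) = fun ω => 1 + (Real.exp c - 1) * X ω := by
    funext ω
    rcases hX ω with h | h <;> simp [h]
  constructor
  · rw [hfun]; exact (integrable_const 1).add (hXint.const_mul _)
  · rw [hfun, integral_add (integrable_const 1) (hXint.const_mul _), integral_const,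
      integral_const_mul]
    have hx : ∫ ω, X ω ∂μ = (μ {ω | X ω = 1}).toReal := by
      conv_lhs => rw [hXind]
      rw [integral_indicator_const (1:ℝ) hset]
      simp [measureReal_def]
    rw [hx]
    simp [measure_univ]

lemma bernoulli_tail {Ω : Type} [MeasurableSpace Ω] {μ : Measure Ω}
    [IsProbabilityMeasure μ] {ι : Type} [DecidableEq ι] (X : ι → Ω → ℝ)
    (hmeas : ∀ i, Measurable (X i))
    (hindep : iIndepFun (m := fun _ => (inferInstance : MeasurableSpace ℝ)) X μ)
    (hX : ∀ i ω, X i ω = 0 ∨ X i ω = 1)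
    (m : ι → ℝ) (P : Finset ι)
    (hE : ∀ p ∈ P, (μ {ω | X p ω = 1}).toReal = m p)
    (hm : ∀ p ∈ P, 0 ≤ m p ∧ m p ≤ 1)
    {l s : ℝ} (hl0 : 0 ≤ l) (hl1 : l ≤ 1) :
    (μ {ω | s ≤ |∑ p ∈ P, (X p ω - m p)|}).toReal ≤
      2 * Real.exp (-(l * s) + l ^ 2 * P.card) := by
  have habs : |l| ≤ 1 := by rwa [abs_of_nonneg hl0]
  have hnabs : |(-l)| ≤ 1 := by rwa [abs_neg]
  set M : ℝ := ∑ p ∈ P, m p with hM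
  -- mgf bounds
  have hmgf : ∀ c : ℝ, |c| ≤ 1 →
      mgf (∑ p ∈ P, X p) μ c ≤ Real.exp (c * M + c ^ 2 * P.card) := by
    intro c hc
    rw [hindep.mgf_sum hmeas P]
    have step : ∀ p ∈ P, mgf (X p) μ c ≤ Real.exp (c * m p + c ^ 2) := by
      intro p hp
      have h2 := two_point_integral μ (hmeas p) (hX p) c
      have hmp := hm p hp
      have : mgf (X p) μ c = 1 + (Real.exp c - 1) * m p := by
        rw [mgf, h2.2, hE p hp]
      rw [this]
      have hpos : 0 < Real.exp (-(c * m p)) := Real.exp_pos _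
      have := factor_bound hc hmp.1 hmp.2
      calc 1 + (Real.exp c - 1) * m p
          = Real.exp (c * m p) * (Real.exp (-(c * m p)) * (1 + (Real.exp c - 1) * m p)) := by
            rw [← mul_assoc, ← Real.exp_add]; simp
        _ ≤ Real.exp (c * m p) * Real.exp (c ^ 2) := by
            apply mul_le_mul_of_nonneg_left this (Real.exp_pos _).le
        _ = Real.exp (c * m p + c ^ 2) := (Real.exp_add _ _).symm
    calc ∏ p ∈ P, mgf (X p) μ c ≤ ∏ p ∈ P, Real.exp (c * m p + c ^ 2) := by
          apply Finset.prod_le_prod (fun p _ => mgf_nonneg) step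
      _ = Real.exp (∑ p ∈ P, (c * m p + c ^ 2)) := by rw [Real.exp_sum]
      _ = Real.exp (c * M + c ^ 2 * P.card) := by
          rw [Finset.sum_add_distrib, ← Finset.mul_sum, Finset.sum_const, hM]
          simp [nsmul_eq_mul, mul_comm]
  have hint : ∀ (c : ℝ), Integrable (fun ω => Real.exp (c * (∑ p ∈ P, X p) ω)) μ :=
    fun c => hindep.integrable_exp_mul_sum hmeas
      (fun p _ => (two_point_integral μ (hmeas p) (hX p) c).1)
  -- upper tail
  have hup : (μ {ω | s + M ≤ (∑ p ∈ P, X p) ω}).toReal ≤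
      Real.exp (-(l * s) + l ^ 2 * P.card) := by
    calc (μ {ω | s + M ≤ (∑ p ∈ P, X p) ω}).toReal
        ≤ Real.exp (-l * (s + M)) * mgf (∑ p ∈ P, X p) μ l :=
          measure_ge_le_exp_mul_mgf (s + M) hl0 (hint l)
      _ ≤ Real.exp (-l * (s + M)) * Real.exp (l * M + l ^ 2 * P.card) :=
          mul_le_mul_of_nonneg_left (hmgf l habs) (Real.exp_pos _).le
      _ = Real.exp (-(l * s) + l ^ 2 * P.card) := by
          rw [← Real.exp_add]; ring_nf
  -- lower tail
  have hlow : (μ {ω | (∑ p ∈ P, X p) ω ≤ M - s}).toReal ≤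
      Real.exp (-(l * s) + l ^ 2 * P.card) := by
    calc (μ {ω | (∑ p ∈ P, X p) ω ≤ M - s}).toReal
        ≤ Real.exp (-(-l) * (M - s)) * mgf (∑ p ∈ P, X p) μ (-l) :=
          measure_le_le_exp_mul_mgf (M - s) (neg_nonpos_of_nonneg hl0) (hint (-l))
      _ ≤ Real.exp (-(-l) * (M - s)) * Real.exp ((-l) * M + (-l) ^ 2 * P.card) :=
          mul_le_mul_of_nonneg_left (hmgf (-l) hnabs) (Real.exp_pos _).le
      _ = Real.exp (-(l * s) + l ^ 2 * P.card) := by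
          rw [← Real.exp_add]; ring_nf
  -- combine
  have hincl : {ω | s ≤ |∑ p ∈ P, (X p ω - m p)|} ⊆
      {ω | s + M ≤ (∑ p ∈ P, X p) ω} ∪ {ω | (∑ p ∈ P, X p) ω ≤ M - s} := by
    intro ω hω
    simp only [Set.mem_setOf_eq] at hω
    have hsum : ∑ p ∈ P, (X p ω - m p) = (∑ p ∈ P, X p) ω - M := by
      rw [Finset.sum_sub_distrib, hM]; simp
    rw [hsum] at hω
    rcases le_abs.mp hω with h | h
    · left; simp only [Set.mem_setOf_eq]; linarith
    · right; simp only [Set.mem_setOf_eq]; linarith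
  have hμ : μ {ω | s ≤ |∑ p ∈ P, (X p ω - m p)|} ≤
      μ {ω | s + M ≤ (∑ p ∈ P, X p) ω} + μ {ω | (∑ p ∈ P, X p) ω ≤ M - s} :=
    le_trans (measure_mono hincl) (measure_union_le _ _)
  have h1 : μ {ω | s + M ≤ (∑ p ∈ P, X p) ω} ≠ ⊤ := measure_ne_top _ _
  have h2 : μ {ω | (∑ p ∈ P, X p) ω ≤ M - s} ≠ ⊤ := measure_ne_top _ _
  calc (μ {ω | s ≤ |∑ p ∈ P, (X p ω - m p)|}).toReal
      ≤ (μ {ω | s + M ≤ (∑ p ∈ P, X p) ω} + μ {ω | (∑ p ∈ P, X p) ω ≤ M - s}).toReal :=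
        ENNReal.toReal_mono (by simp [ENNReal.add_ne_top, h1, h2]) hμ
    _ = (μ {ω | s + M ≤ (∑ p ∈ P, X p) ω}).toReal +
        (μ {ω | (∑ p ∈ P, X p) ω ≤ M - s}).toReal := ENNReal.toReal_add h1 h2
    _ ≤ 2 * Real.exp (-(l * s) + l ^ 2 * P.card) := by linarith

set_option maxHeartbeats 1000000 in
lemma union_bound
    {Ω : Type} [MeasurableSpace Ω] (μ : Measure Ω) [IsProbabilityMeasure μ]
    {n Ks Kr Ks0 Kr0 : ℕ}
    (B : Matrix (Fin Ks) (Fin Kr) ℝ) (gs : Fin n → Fin Ks) (gr : Fin n → Fin Kr)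
    (A : Ω → Matrix (Fin n) (Fin n) ℝ)
    (hmeasA : ∀ i j : Fin n, Measurable fun ω => A ω i j)
    (h01 : ∀ ω (i j : Fin n), A ω i j = 0 ∨ A ω i j = 1)
    (hdiagA : ∀ ω (i : Fin n), A ω i i = 0)
    (hdist : ∀ (i j : Fin n), i ≠ j →
      μ {ω | A ω i j = 1} = ENNReal.ofReal (B (gs i) (gr j)))
    (hindep : iIndepFun (m := fun _ : Fin n × Fin n => (inferInstance : MeasurableSpace ℝ))
      (fun p ω => A ω p.1 p.2) μ)
    (δ : ℝ) (hδ : 0 < δ) (hδ2 : δ ≤ 1/2)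
    (hA1 : ∀ k l, δ ≤ B k l ∧ B k l ≤ 1 - δ)
    (es : Ω → Fin n → Fin Ks0) (er : Ω → Fin n → Fin Kr0)
    (q : ℝ) (hq : 4 ≤ q)
    (hsizeS : ∀ ω k, q ≤ (commSize (es ω) k : ℝ))
    (hsizeR : ∀ ω l, q ≤ (commSize (er ω) l : ℝ)) :
    (μ {ω | ¬ ∀ i j : Fin n, i ≠ j →
        OmegaHat (A ω) (es ω) (er ω) i j ∈ Set.Icc (δ/2) (1 - δ/2)}).toReal
      ≤ ((Ks0^n * Kr0^n * Ks0 * Kr0 : ℕ) : ℝ) * (2 * Real.exp (-(δ^2/64) * q^2)) := by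
  classical
  set I := ((Fin n → Fin Ks0) × (Fin n → Fin Kr0)) × (Fin Ks0 × Fin Kr0) with hI
  let S : I → Finset (Fin n) := fun z => Finset.univ.filter (fun i => z.1.1 i = z.2.1)
  let T : I → Finset (Fin n) := fun z => Finset.univ.filter (fun j => z.1.2 j = z.2.2)
  let P : I → Finset (Fin n × Fin n) :=
    fun z => ((S z) ×ˢ (T z)).filter (fun p => p.1 ≠ p.2)
  let m : Fin n × Fin n → ℝ :=
    fun p => if p.1 = p.2 then 0 else B (gs p.1) (gr p.2)
  let Ev : I → Set Ω := fun z =>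
    {ω | (δ/4) * (((S z).card : ℝ) * ((T z).card : ℝ)) ≤
      |∑ p ∈ P z, (A ω p.1 p.2 - m p)|}
  let Qgood : Finset I := Finset.univ.filter
    (fun z => q ≤ ((S z).card : ℝ) ∧ q ≤ ((T z).card : ℝ))
  have hm01 : ∀ p : Fin n × Fin n, 0 ≤ m p ∧ m p ≤ 1 := by
    intro p
    by_cases hp : p.1 = p.2
    · simp [m, hp]
    · simp only [m, if_neg hp]
      exact ⟨le_trans hδ.le (hA1 _ _).1, by linarith [(hA1 (gs p.1) (gr p.2)).2]⟩
  have hcardP_le : ∀ z : I, ((P z).card : ℝ) ≤ ((S z).card : ℝ) * ((T z).card : ℝ) := by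
    intro z
    have h1 : (P z).card ≤ ((S z) ×ˢ (T z)).card := Finset.card_filter_le _ _
    have h2 : ((S z) ×ˢ (T z)).card = (S z).card * (T z).card := Finset.card_product _ _
    rw [h2] at h1
    exact_mod_cast h1
  -- Step 1 : inclusion
  have hincl : {ω | ¬ ∀ i j : Fin n, i ≠ j →
      OmegaHat (A ω) (es ω) (er ω) i j ∈ Set.Icc (δ/2) (1 - δ/2)} ⊆
      ⋃ z ∈ Qgood, Ev z := by
    intro ω hω
    simp only [Set.mem_setOf_eq] at hω
    push_neg at hω
    obtain ⟨i, j, hij, hmem⟩ := hω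
    set z : I := ((es ω, er ω), (es ω i, er ω j)) with hz
    have hSq : q ≤ ((S z).card : ℝ) := hsizeS ω (es ω i)
    have hTq : q ≤ ((T z).card : ℝ) := hsizeR ω (er ω j)
    have hzg : z ∈ Qgood := by
      simp only [Qgood, Finset.mem_filter, Finset.mem_univ, true_and]
      exact ⟨hSq, hTq⟩
    refine Set.mem_biUnion hzg ?_
    have hS4 : (4:ℝ) ≤ ((S z).card : ℝ) := le_trans hq hSq
    have hT4 : (4:ℝ) ≤ ((T z).card : ℝ) := le_trans hq hTq
    have hQpos : (0:ℝ) < ((S z).card : ℝ) * ((T z).card : ℝ) := by nlinarith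
    have hDsum : ∑ i' ∈ S z, ∑ j' ∈ T z, A ω i' j' = ∑ p ∈ P z, A ω p.1 p.2 := by
      rw [← Finset.sum_product' (f := fun i' j' => A ω i' j')]
      refine (Finset.sum_filter_of_ne ?_).symm
      intro p hp hne hpe
      exact hne (by rw [hpe]; exact hdiagA ω p.2)
    set SA : ℝ := ∑ p ∈ P z, A ω p.1 p.2 with hSA
    set MB : ℝ := ∑ p ∈ P z, m p with hMB
    have hval : OmegaHat (A ω) (es ω) (er ω) i j
        = SA / (((S z).card : ℝ) * ((T z).card : ℝ)) := by
      show (if i = j then (0:ℝ) else Bhat (A ω) (es ω) (er ω) (es ω i) (er ω j)) = _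
      rw [if_neg hij]
      show (∑ i' ∈ S z, ∑ j' ∈ T z, A ω i' j') / _ = _
      rw [hDsum]
      rfl
    have hcard_ge : ((S z).card : ℝ) * ((T z).card : ℝ) - ((S z).card : ℝ)
        ≤ ((P z).card : ℝ) := by
      have hsplit := Finset.card_filter_add_card_filter_not
        (s := (S z) ×ˢ (T z)) (p := fun p => p.1 ≠ p.2)
      have hdiag : (((S z) ×ˢ (T z)).filter (fun p => ¬ p.1 ≠ p.2)).card ≤ (S z).card := by
        apply Finset.card_le_card_of_injOn (fun p => p.1)
        · intro p hp
          simp only [Finset.mem_coe, Finset.mem_filter, Finset.mem_product, not_not] at hp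
          exact hp.1.1
        · intro p hp p' hp' hpp
          simp only [Finset.mem_coe, Finset.mem_filter, Finset.mem_product, not_not] at hp hp'
          have h1 : p.1 = p'.1 := hpp
          exact Prod.ext h1 (by rw [← hp.2, ← hp'.2]; exact h1)
      have hprod : ((S z) ×ˢ (T z)).card = (S z).card * (T z).card :=
        Finset.card_product _ _
      have hP : (P z).card = (((S z) ×ˢ (T z)).filter (fun p => p.1 ≠ p.2)).card := rfl
      have hN : (S z).card * (T z).card ≤ (P z).card + (S z).card := by omega
      have hNR : ((S z).card : ℝ) * ((T z).card : ℝ) ≤ ((P z).card : ℝ) + ((S z).card : ℝ) := by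
        exact_mod_cast hN
      linarith
    have hMB_le : MB ≤ (1 - δ) * (((S z).card : ℝ) * ((T z).card : ℝ)) := by
      have h1 : MB ≤ ∑ _p ∈ P z, (1 - δ) := by
        apply Finset.sum_le_sum
        intro p _
        show m p ≤ 1 - δ
        by_cases hp : p.1 = p.2
        · simp only [m, if_pos hp]; linarith
        · simp only [m, if_neg hp]; exact (hA1 _ _).2
      rw [Finset.sum_const, nsmul_eq_mul] at h1
      have := hcardP_le z
      nlinarith
    have hMB_ge : (3*δ/4) * (((S z).card : ℝ) * ((T z).card : ℝ)) ≤ MB := by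
      have h1 : ∑ p ∈ P z, δ ≤ MB := by
        apply Finset.sum_le_sum
        intro p hp
        have hne : p.1 ≠ p.2 := (Finset.mem_filter.mp hp).2
        show δ ≤ m p
        simp only [m, if_neg hne]
        exact (hA1 _ _).1
      rw [Finset.sum_const, nsmul_eq_mul] at h1
      have h2 : δ * (((S z).card : ℝ) * ((T z).card : ℝ) - ((S z).card : ℝ))
          ≤ δ * ((P z).card : ℝ) := mul_le_mul_of_nonneg_left hcard_ge hδ.le
      have h3 : δ * ((S z).card : ℝ) ≤ (δ/4) * (((S z).card : ℝ) * ((T z).card : ℝ)) := by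
        nlinarith [mul_nonneg (mul_nonneg hδ.le (by linarith : (0:ℝ) ≤ ((S z).card : ℝ)))
          (by linarith : (0:ℝ) ≤ ((T z).card : ℝ) - 4)]
      nlinarith
    rw [hval, Set.mem_Icc] at hmem
    push_neg at hmem
    have hsub : ∑ p ∈ P z, (A ω p.1 p.2 - m p) = SA - MB := Finset.sum_sub_distrib _ _
    show (δ/4) * (((S z).card : ℝ) * ((T z).card : ℝ)) ≤ |∑ p ∈ P z, (A ω p.1 p.2 - m p)|
    rw [hsub]
    by_cases hcase : SA / (((S z).card : ℝ) * ((T z).card : ℝ)) < δ/2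
    · have hSAlt : SA < (δ/2) * (((S z).card : ℝ) * ((T z).card : ℝ)) := by
        rw [div_lt_iff₀ hQpos] at hcase; linarith
      have hkey : (δ/4) * (((S z).card : ℝ) * ((T z).card : ℝ)) ≤ MB - SA := by nlinarith
      calc (δ/4) * (((S z).card : ℝ) * ((T z).card : ℝ)) ≤ MB - SA := hkey
        _ ≤ |SA - MB| := by rw [abs_sub_comm]; exact le_abs_self _
    · have hgt : 1 - δ/2 < SA / (((S z).card : ℝ) * ((T z).card : ℝ)) :=
        hmem (not_lt.mp hcase)
      have hSAgt : (1 - δ/2) * (((S z).card : ℝ) * ((T z).card : ℝ)) < SA := by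
        rw [lt_div_iff₀ hQpos] at hgt; linarith
      have hkey : (δ/4) * (((S z).card : ℝ) * ((T z).card : ℝ)) ≤ SA - MB := by nlinarith
      exact le_trans hkey (le_abs_self _)
  -- Step 2+3 : per-event bound
  have hev : ∀ z ∈ Qgood, (μ (Ev z)).toReal ≤ 2 * Real.exp (-(δ^2/64) * q^2) := by
    intro z hzg
    simp only [Qgood, Finset.mem_filter, Finset.mem_univ, true_and] at hzg
    obtain ⟨hSq, hTq⟩ := hzg
    have htail := bernoulli_tail (ι := Fin n × Fin n)
      (fun p ω => A ω p.1 p.2) (fun p => hmeasA p.1 p.2) hindep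
      (fun p ω => h01 ω p.1 p.2) m (P z)
      (fun p hp => by
        have hne : p.1 ≠ p.2 := (Finset.mem_filter.mp hp).2
        show (μ {ω | A ω p.1 p.2 = 1}).toReal = m p
        simp only [m, if_neg hne]
        rw [hdist p.1 p.2 hne, ENNReal.toReal_ofReal (le_trans hδ.le (hA1 _ _).1)])
      (fun p _ => hm01 p)
      (l := δ/8) (s := (δ/4) * (((S z).card : ℝ) * ((T z).card : ℝ)))
      (by linarith) (by linarith)
    refine le_trans htail ?_
    have hexp : -(δ/8 * ((δ/4) * (((S z).card : ℝ) * ((T z).card : ℝ)))) +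
        (δ/8)^2 * ((P z).card : ℝ) ≤ -(δ^2/64) * q^2 := by
      have hcl := hcardP_le z
      have hq0 : (0:ℝ) ≤ q := by linarith
      have hQq : q^2 ≤ ((S z).card : ℝ) * ((T z).card : ℝ) := by nlinarith
      nlinarith [sq_nonneg δ, sq_nonneg q]
    have := Real.exp_le_exp.mpr hexp
    linarith
  -- Step 4 : assemble
  have hμle : μ {ω | ¬ ∀ i j : Fin n, i ≠ j →
      OmegaHat (A ω) (es ω) (er ω) i j ∈ Set.Icc (δ/2) (1 - δ/2)} ≤
      ∑ z ∈ Qgood, μ (Ev z) :=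
    le_trans (measure_mono hincl) (measure_biUnion_finset_le _ _)
  have hfin : ∀ z ∈ Qgood, μ (Ev z) ≠ ⊤ := fun z _ => measure_ne_top _ _
  have hcardI : (Fintype.card I : ℝ) ≤ ((Ks0^n * Kr0^n * Ks0 * Kr0 : ℕ) : ℝ) := by
    have : Fintype.card I = Ks0^n * Kr0^n * Ks0 * Kr0 := by
      show Fintype.card (((Fin n → Fin Ks0) × (Fin n → Fin Kr0)) × (Fin Ks0 × Fin Kr0)) = _
      simp [Fintype.card_prod, Fintype.card_fun, Fintype.card_fin]
      ring
    rw [this]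
  calc (μ {ω | ¬ ∀ i j : Fin n, i ≠ j →
      OmegaHat (A ω) (es ω) (er ω) i j ∈ Set.Icc (δ/2) (1 - δ/2)}).toReal
      ≤ (∑ z ∈ Qgood, μ (Ev z)).toReal :=
        ENNReal.toReal_mono (by
          rw [← lt_top_iff_ne_top]
          exact ENNReal.sum_lt_top.mpr (fun z hz => lt_top_iff_ne_top.mpr (hfin z hz))) hμle
    _ = ∑ z ∈ Qgood, (μ (Ev z)).toReal := ENNReal.toReal_sum hfin
    _ ≤ ∑ _z ∈ Qgood, (2 * Real.exp (-(δ^2/64) * q^2)) := Finset.sum_le_sum hev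
    _ = (Qgood.card : ℝ) * (2 * Real.exp (-(δ^2/64) * q^2)) := by
        rw [Finset.sum_const, nsmul_eq_mul]
    _ ≤ ((Ks0^n * Kr0^n * Ks0 * Kr0 : ℕ) : ℝ) * (2 * Real.exp (-(δ^2/64) * q^2)) := by
        apply mul_le_mul_of_nonneg_right _ (by positivity)
        refine le_trans ?_ hcardI
        have hQc : Qgood.card ≤ Fintype.card I := by
          calc Qgood.card ≤ (Finset.univ : Finset I).card := Finset.card_filter_le _ _
            _ = Fintype.card I := rfl
        exact_mod_cast hQc

end OmegaHatAux

set_option maxHeartbeats 1000000 in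
/-- Lemma (entries of `Ω̂` are bounded away from 0 and 1): under A1–A3, if every
estimated sender and receiver community has size at least `c₀ n / K_max`, then with
probability `1 − o(n^{−1})` all off-diagonal entries of `Ω̂` lie in
`[δ/2, 1 − δ/2]`. -/
theorem OmegaHat_bounded
    {Ωsp : ℕ → Type} [∀ n, MeasurableSpace (Ωsp n)]
    (μ : ∀ n, Measure (Ωsp n)) (hprob : ∀ n, IsProbabilityMeasure (μ n))
    (Ks Kr : ℕ → ℕ) (hKs : ∀ n, 1 ≤ Ks n) (hKr : ∀ n, 1 ≤ Kr n)
    (B : ∀ n, Matrix (Fin (Ks n)) (Fin (Kr n)) ℝ)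
    (gs : ∀ n, Fin n → Fin (Ks n)) (gr : ∀ n, Fin n → Fin (Kr n))
    (A : ∀ n, Ωsp n → Matrix (Fin n) (Fin n) ℝ)
    (hmeasA : ∀ n (i j : Fin n), Measurable fun ω => A n ω i j)
    (h01 : ∀ n ω (i j : Fin n), A n ω i j = 0 ∨ A n ω i j = 1)
    (hdiagA : ∀ n ω (i : Fin n), A n ω i i = 0)
    (hdist : ∀ n (i j : Fin n), i ≠ j →
      μ n {ω | A n ω i j = 1} = ENNReal.ofReal (B n (gs n i) (gr n j)))
    (hindep : ∀ n, iIndepFun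
      (m := fun _ : Fin n × Fin n => (inferInstance : MeasurableSpace ℝ))
      (fun p ω => A n ω p.1 p.2) (μ n))
    (δ : ℝ) (hδ : 0 < δ)
    (hA1 : ∀ n (k : Fin (Ks n)) (l : Fin (Kr n)), δ ≤ B n k l ∧ B n k l ≤ 1 - δ)
    (c0 : ℝ) (hc0 : 0 < c0)
    (hA2s : ∀ n (k : Fin (Ks n)), c0 * n / Ks n ≤ (commSize (gs n) k : ℝ))
    (hA2r : ∀ n (l : Fin (Kr n)), c0 * n / Kr n ≤ (commSize (gr n) l : ℝ))
    (hA3 : Tendsto (fun n : ℕ =>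
        (max (Ks n) (Kr n) : ℝ) ^ 2 * max (Real.log n) (1 / (sep (B n)) ^ 2) / n)
      atTop (nhds 0))
    (Ks0 Kr0 : ℕ → ℕ) (hKs0 : ∀ n, Ks0 n ≤ Ks n) (hKr0 : ∀ n, Kr0 n ≤ Kr n)
    (es : ∀ n, Ωsp n → Fin n → Fin (Ks0 n)) (er : ∀ n, Ωsp n → Fin n → Fin (Kr0 n))
    (hsizeS : ∀ n ω (k : Fin (Ks0 n)),
      c0 * n / (max (Ks n) (Kr n) : ℝ) ≤ (commSize (es n ω) k : ℝ))
    (hsizeR : ∀ n ω (l : Fin (Kr0 n)),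
      c0 * n / (max (Ks n) (Kr n) : ℝ) ≤ (commSize (er n ω) l : ℝ)) :
    Tendsto (fun n : ℕ => (n : ℝ) *
        (μ n {ω | ¬ ∀ i j : Fin n, i ≠ j →
          OmegaHat (A n ω) (es n ω) (er n ω) i j ∈
            Set.Icc (δ / 2) (1 - δ / 2)}).toReal)
      atTop (nhds 0) := by
  have hδ2 : δ ≤ 1/2 := by
    have h := hA1 0 ⟨0, hKs 0⟩ ⟨0, hKr 0⟩
    linarith [h.1, h.2]
  set c' : ℝ := c0^2 * δ^2 / 64 with hc'
  have hc'pos : 0 < c' := by positivity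
  have hlog : Tendsto (fun n : ℕ => (max (Ks n) (Kr n) : ℝ)^2 * Real.log n / n)
      atTop (nhds 0) := by
    apply tendsto_of_tendsto_of_tendsto_of_le_of_le' tendsto_const_nhds hA3
    · filter_upwards [eventually_ge_atTop 1] with n hn
      have h0 : (0:ℝ) ≤ Real.log n := Real.log_nonneg (by exact_mod_cast hn)
      have h1 : (0:ℝ) ≤ (max (Ks n) (Kr n) : ℝ) := by positivity
      positivity
    · filter_upwards [eventually_ge_atTop 1] with n hn
      have hn0 : (0:ℝ) < n := by exact_mod_cast hn
      gcongr
      exact le_max_left _ _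
  have hmin : (0:ℝ) < min (1/2 : ℝ) (c'/8) := lt_min (by norm_num) (by positivity)
  have hev1 : ∀ᶠ n in atTop,
      (max (Ks n) (Kr n) : ℝ)^2 * Real.log n / n < min (1/2 : ℝ) (c'/8) :=
    hlog.eventually_lt_const hmin
  have hev2 : ∀ᶠ n : ℕ in atTop, 3 ≤ n := eventually_ge_atTop 3
  have hev3 : ∀ᶠ n : ℕ in atTop, 16/c0^2 ≤ (n:ℝ) :=
    tendsto_natCast_atTop_atTop.eventually_ge_atTop (16/c0^2)
  have hbound : ∀ᶠ n : ℕ in atTop, (n : ℝ) *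
      (μ n {ω | ¬ ∀ i j : Fin n, i ≠ j →
        OmegaHat (A n ω) (es n ω) (er n ω) i j ∈
          Set.Icc (δ / 2) (1 - δ / 2)}).toReal ≤ Real.exp (-(n:ℝ)) := by
    filter_upwards [hev1, hev2, hev3] with n h1 h2 h3
    haveI := hprob n
    set K : ℝ := (max (Ks n) (Kr n) : ℝ) with hK
    have hK1 : (1:ℝ) ≤ K := by
      have h := hKs n
      have : (1:ℝ) ≤ (Ks n : ℝ) := by exact_mod_cast h
      exact le_trans this (le_max_left _ _)
    have hK0 : (0:ℝ) < K := by linarith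
    have hn3 : (3:ℝ) ≤ n := by exact_mod_cast h2
    have hnpos : (0:ℝ) < n := by linarith
    have hlogn : 1 ≤ Real.log n := by
      rw [Real.le_log_iff_exp_le hnpos]
      linarith [Real.exp_one_lt_d9]
    have hKn : K^2 * Real.log n ≤ (min (1/2 : ℝ) (c'/8)) * n := by
      have h1' := h1.le
      rw [div_le_iff₀ hnpos] at h1'
      linarith
    have hK2 : K^2 ≤ n := by
      have h12 : K^2 * Real.log n ≤ (1/2) * n := by
        refine le_trans hKn ?_
        have := min_le_left (1/2 : ℝ) (c'/8)
        nlinarith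
      nlinarith [sq_nonneg K]
    set q : ℝ := c0 * n / K with hq
    have hqnn : 0 ≤ q := by positivity
    have hqsq : q^2 = c0^2 * n^2 / K^2 := by
      rw [hq]; field_simp
    have hq2 : 16 ≤ q^2 := by
      rw [hqsq]
      have h4 : c0^2 * n ≤ c0^2 * n^2 / K^2 := by
        rw [le_div_iff₀ (by positivity : (0:ℝ) < K^2)]
        nlinarith [mul_le_mul_of_nonneg_left hK2 (show (0:ℝ) ≤ c0^2 * (n:ℝ) by positivity)]
      have h5 : 16 ≤ c0^2 * n := by
        rw [div_le_iff₀ (by positivity : (0:ℝ) < c0^2)] at h3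
        linarith
      linarith
    have hq4 : 4 ≤ q := by nlinarith
    have hub := union_bound (μ n) (B n) (gs n) (gr n) (A n) (hmeasA n)
      (h01 n) (hdiagA n) (hdist n) (hindep n) δ hδ hδ2 (hA1 n) (es n) (er n)
      q hq4 (hsizeS n) (hsizeR n)
    set E : ℝ := (δ^2/64) * q^2 with hE
    have hrw : -(δ^2/64) * q^2 = -E := by rw [hE]; ring
    rw [hrw] at hub
    set C : ℝ := ((Ks0 n ^ n * Kr0 n ^ n * Ks0 n * Kr0 n : ℕ) : ℝ) with hC
    have hC0 : 0 ≤ C := Nat.cast_nonneg _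
    -- bound C by K^(2n+2)
    have hKs0K : ((Ks0 n : ℝ)) ≤ K := by
      have : (Ks0 n : ℝ) ≤ (Ks n : ℝ) := by exact_mod_cast hKs0 n
      exact le_trans this (le_max_left _ _)
    have hKr0K : ((Kr0 n : ℝ)) ≤ K := by
      have : (Kr0 n : ℝ) ≤ (Kr n : ℝ) := by exact_mod_cast hKr0 n
      exact le_trans this (le_max_right _ _)
    have hCK : C ≤ K^(2*n+2) := by
      calc C = (Ks0 n : ℝ)^n * (Kr0 n : ℝ)^n * (Ks0 n : ℝ) * (Kr0 n : ℝ) := by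
            rw [hC]; push_cast; ring
        _ ≤ K^n * K^n * K * K := by
            gcongr <;> simp [Nat.cast_nonneg]
        _ = K^(2*n+2) := by ring
    have hlogK : 2 * Real.log K ≤ Real.log n := by
      have h6 : Real.log (K^2) ≤ Real.log n := Real.log_le_log (by positivity) hK2
      rwa [Real.log_pow, Nat.cast_ofNat] at h6
    have hlogK0 : 0 ≤ Real.log K := Real.log_nonneg hK1
    have hKpow : K ^ (2*n+2) = Real.exp ((2*(n:ℝ)+2) * Real.log K) := by
      rw [show (2*(n:ℝ)+2) = ((2*n+2 : ℕ):ℝ) by push_cast; ring, ← Real.log_pow,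
        Real.exp_log (pow_pos hK0 _)]
    have hCexp : C ≤ Real.exp (((n:ℝ)+1) * Real.log n) := by
      refine le_trans (hCK.trans (le_of_eq hKpow)) (Real.exp_le_exp.mpr ?_)
      nlinarith [mul_le_mul_of_nonneg_left hlogK (show (0:ℝ) ≤ (n:ℝ)+1 by linarith)]
    have hnexp : (n:ℝ) ≤ Real.exp (Real.log n) := le_of_eq (Real.exp_log hnpos).symm
    have h2exp : (2:ℝ) ≤ Real.exp (Real.log n) := by
      rw [Real.exp_log hnpos]; linarith
    have hEge : 8 * ((n:ℝ) * Real.log n) ≤ E := by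
      have hEeq : E = c' * n^2 / K^2 := by
        rw [hE, hqsq, hc']; field_simp
      rw [hEeq, le_div_iff₀ (by positivity : (0:ℝ) < K^2)]
      have h7 : K^2 * Real.log n ≤ (c'/8) * n :=
        le_trans hKn (mul_le_mul_of_nonneg_right (min_le_right _ _) hnpos.le)
      nlinarith [mul_le_mul_of_nonneg_left h7 (show (0:ℝ) ≤ 8*(n:ℝ) by linarith)]
    have hμ0 : (0:ℝ) ≤ (μ n {ω | ¬ ∀ i j : Fin n, i ≠ j →
        OmegaHat (A n ω) (es n ω) (er n ω) i j ∈
          Set.Icc (δ / 2) (1 - δ / 2)}).toReal := ENNReal.toReal_nonneg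
    calc (n : ℝ) * (μ n {ω | ¬ ∀ i j : Fin n, i ≠ j →
          OmegaHat (A n ω) (es n ω) (er n ω) i j ∈
            Set.Icc (δ / 2) (1 - δ / 2)}).toReal
        ≤ (n:ℝ) * (C * (2 * Real.exp (-E))) :=
          mul_le_mul_of_nonneg_left hub hnpos.le
      _ ≤ Real.exp (Real.log n) * (Real.exp (((n:ℝ)+1) * Real.log n) *
            (Real.exp (Real.log n) * Real.exp (-E))) := by
          gcongr
      _ = Real.exp (Real.log n + (((n:ℝ)+1) * Real.log n + (Real.log n + -E))) := by
          rw [← Real.exp_add, ← Real.exp_add, ← Real.exp_add]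
      _ ≤ Real.exp (-(n:ℝ)) := by
          apply Real.exp_le_exp.mpr
          nlinarith [hEge, hlogn, hn3]
  have hexp0 : Tendsto (fun n : ℕ => Real.exp (-(n:ℝ))) atTop (nhds 0) :=
    Real.tendsto_exp_atBot.comp (tendsto_neg_atBot_iff.mpr tendsto_natCast_atTop_atTop)
  refine tendsto_of_tendsto_of_tendsto_of_le_of_le' tendsto_const_nhds hexp0 ?_ hbound
  exact Eventually.of_forall fun n => mul_nonneg (Nat.cast_nonneg n) ENNReal.toReal_nonneg
end

section
/- Let n ≥ 2 with 4 log n ≤ n, and let W be a p × q random matrix with p ≤ n, q ≤ n, and p + q ≤ 3n, whose entries W(i,j) = A(i,j) − Ω(i,j) are independent, mean zero, satisfy |W(i,j)| ≤ 1 almost surely, and have variances Var(W(i,j)) ≤ 1/4 (e.g., A(i,j) Bernoulli(Ω(i,j))). Then P(‖W‖ ≥ 3√(n log n)) ≤ 3 n^{−7/2}, where ‖W‖ denotes the spectral norm. -/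
open MeasureTheory ProbabilityTheory Filter Finset
open scoped ENNReal Classical

section AuxiliaryLemmas

open Metric
open scoped RealInnerProductSpace NNReal

lemma mgf_le_of_bounded {Ω : Type*} [MeasurableSpace Ω] {μ : Measure Ω} [IsProbabilityMeasure μ]
    {Z : Ω → ℝ} (hZm : Measurable Z) (hmean : ∫ ω, Z ω ∂μ = 0) {a : ℝ} (ha : 0 ≤ a)
    (hb : ∀ᵐ ω ∂μ, |Z ω| ≤ a) (t : ℝ) :
    mgf Z μ t ≤ Real.exp (t ^ 2 * a ^ 2 / 2) := by
  rcases ha.eq_or_lt with rfl | ha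
  · have hZ0 : ∀ᵐ ω ∂μ, Z ω = 0 := by
      filter_upwards [hb] with ω h using abs_nonpos_iff.mp h
    have : mgf Z μ t = 1 := by
      rw [mgf]
      rw [integral_congr_ae (g := fun _ => (1:ℝ))]
      · simp
      · filter_upwards [hZ0] with ω h; simp [h]
    rw [this]
    norm_num
  · have hZint : Integrable Z μ :=
      Integrable.mono' (integrable_const a) hZm.aestronglyMeasurable
        (by filter_upwards [hb] with ω h using by simpa using h)
    set c0 : ℝ := (Real.exp (t * a) + Real.exp (-(t * a))) / 2 with hc0
    set k : ℝ := (Real.exp (t * a) - Real.exp (-(t * a))) / (2 * a) with hk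
    have key : ∀ᵐ ω ∂μ, Real.exp (t * Z ω) ≤ c0 + Z ω * k := by
      filter_upwards [hb] with ω h
      have h1 : -a ≤ Z ω := neg_le_of_abs_le h
      have h2 : Z ω ≤ a := le_of_abs_le h
      set l : ℝ := (Z ω + a) / (2 * a) with hl
      have hl0 : 0 ≤ l := div_nonneg (by linarith) (by linarith)
      have hl1 : 0 ≤ 1 - l := by
        rw [hl]; rw [sub_nonneg, div_le_one (by linarith)]; linarith
      have hconv := convexOn_exp.2 (Set.mem_univ (-(t*a))) (Set.mem_univ (t*a)) hl1 hl0
        (by ring)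
      have harg : (1 - l) • (-(t*a)) + l • (t*a) = t * Z ω := by
        simp only [smul_eq_mul, hl]; field_simp; ring
      rw [harg] at hconv
      have : (1 - l) • Real.exp (-(t*a)) + l • Real.exp (t*a) = c0 + Z ω * k := by
        simp only [smul_eq_mul, hl, hc0, hk]; field_simp; ring
      linarith [hconv, this.le, this.ge]
    have hint : Integrable (fun ω => Real.exp (t * Z ω)) μ := by
      refine Integrable.mono' (integrable_const (Real.exp (|t| * a)))
        ((hZm.const_mul t).exp.aestronglyMeasurable) ?_
      filter_upwards [hb] with ω h
      rw [Real.norm_eq_abs, abs_of_pos (Real.exp_pos _), Real.exp_le_exp]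
      calc t * Z ω ≤ |t * Z ω| := le_abs_self _
        _ = |t| * |Z ω| := abs_mul _ _
        _ ≤ |t| * a := by apply mul_le_mul_of_nonneg_left h (abs_nonneg t)
    have hRint : Integrable (fun ω => c0 + Z ω * k) μ :=
      (integrable_const c0).add (hZint.mul_const k)
    have h1 : mgf Z μ t ≤ ∫ ω, (c0 + Z ω * k) ∂μ := integral_mono_ae hint hRint key
    have h2 : ∫ ω, (c0 + Z ω * k) ∂μ = c0 := by
      rw [integral_add (integrable_const c0) (hZint.mul_const k), integral_const,
        integral_mul_const, hmean]
      simp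
    have h3 : c0 = Real.cosh (t * a) := by rw [Real.cosh_eq, hc0]
    have h4 : Real.cosh (t * a) ≤ Real.exp ((t*a) ^ 2 / 2) := Real.cosh_le_exp_half_sq _
    calc mgf Z μ t ≤ c0 := h1.trans h2.le
      _ ≤ Real.exp ((t*a)^2/2) := by rw [h3]; exact h4
      _ = Real.exp (t ^ 2 * a ^ 2 / 2) := by rw [mul_pow]


lemma exp_mul_integrable {Ω : Type*} [MeasurableSpace Ω] {μ : Measure Ω} [IsProbabilityMeasure μ]
    {Z : Ω → ℝ} (hZm : Measurable Z) {a : ℝ}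
    (hb : ∀ᵐ ω ∂μ, |Z ω| ≤ a) (t : ℝ) :
    Integrable (fun ω => Real.exp (t * Z ω)) μ := by
  refine Integrable.mono' (integrable_const (Real.exp (|t| * a)))
    ((hZm.const_mul t).exp.aestronglyMeasurable) ?_
  filter_upwards [hb] with ω h
  rw [Real.norm_eq_abs, abs_of_pos (Real.exp_pos _), Real.exp_le_exp]
  calc t * Z ω ≤ |t * Z ω| := le_abs_self _
    _ = |t| * |Z ω| := abs_mul _ _
    _ ≤ |t| * a := by apply mul_le_mul_of_nonneg_left h (abs_nonneg t)

lemma chernoff_sum {Ω : Type*} [MeasurableSpace Ω] {μ : Measure Ω} [IsProbabilityMeasure μ]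
    {ι : Type*} [Fintype ι] {Y : ι → Ω → ℝ} (hYm : ∀ i, Measurable (Y i))
    (hindep : iIndepFun Y μ)
    (hmean : ∀ i, ∫ ω, Y i ω ∂μ = 0) {c : ι → ℝ} (hc0 : ∀ i, 0 ≤ c i)
    (hb : ∀ i, ∀ᵐ ω ∂μ, |Y i ω| ≤ c i) (hc : ∑ i, (c i)^2 ≤ 1)
    {s : ℝ} (hs : 0 ≤ s) :
    μ {ω | s ≤ ∑ i, Y i ω} ≤ ENNReal.ofReal (Real.exp (-s^2/2)) := by
  set X : Ω → ℝ := ∑ i, Y i with hX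
  have hXapp : ∀ ω, X ω = ∑ i, Y i ω := fun ω => by simp [hX]
  have hint : Integrable (fun ω => Real.exp (s * X ω)) μ := by
    apply hindep.integrable_exp_mul_sum hYm
    exact fun i _ => exp_mul_integrable (hYm i) (hb i) s
  have hmgf : mgf X μ s ≤ Real.exp (s^2/2) := by
    rw [hX, hindep.mgf_sum hYm]
    calc ∏ i, mgf (Y i) μ s ≤ ∏ i, Real.exp (s^2 * (c i)^2 / 2) := by
          apply Finset.prod_le_prod (fun i _ => mgf_nonneg)
          exact fun i _ => mgf_le_of_bounded (hYm i) (hmean i) (hc0 i) (hb i) s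
      _ = Real.exp (∑ i, s^2 * (c i)^2 / 2) := by rw [Real.exp_sum]
      _ ≤ Real.exp (s^2/2) := by
          rw [Real.exp_le_exp]
          have : ∑ i, s^2 * (c i)^2/2 = s^2/2 * ∑ i, (c i)^2 := by
            rw [Finset.mul_sum]; apply Finset.sum_congr rfl; intros; ring
          rw [this]
          nlinarith [sq_nonneg s, Finset.sum_nonneg (fun i (_ : i ∈ Finset.univ) => sq_nonneg (c i))]
  have hch := measure_ge_le_exp_mul_mgf (X := X) (μ := μ) (t := s) s hs hint
  have hbound : (μ {ω | s ≤ X ω}).toReal ≤ Real.exp (-s^2/2) := by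
    calc (μ {ω | s ≤ X ω}).toReal ≤ Real.exp (-s * s) * mgf X μ s := hch
      _ ≤ Real.exp (-s * s) * Real.exp (s^2/2) := by
          apply mul_le_mul_of_nonneg_left hmgf (Real.exp_pos _).le
      _ = Real.exp (-s^2/2) := by rw [← Real.exp_add]; ring_nf
  have hne : μ {ω | s ≤ X ω} ≠ ⊤ := measure_ne_top _ _
  calc μ {ω | s ≤ ∑ i, Y i ω} = μ {ω | s ≤ X ω} := by
        congr 1; ext ω; simp [hXapp]
    _ = ENNReal.ofReal ((μ {ω | s ≤ X ω}).toReal) := (ENNReal.ofReal_toReal hne).symm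
    _ ≤ ENNReal.ofReal (Real.exp (-s^2/2)) := ENNReal.ofReal_le_ofReal hbound

lemma chernoff_sum_abs {Ω : Type*} [MeasurableSpace Ω] {μ : Measure Ω} [IsProbabilityMeasure μ]
    {ι : Type*} [Fintype ι] {Y : ι → Ω → ℝ} (hYm : ∀ i, Measurable (Y i))
    (hindep : iIndepFun Y μ)
    (hmean : ∀ i, ∫ ω, Y i ω ∂μ = 0) {c : ι → ℝ} (hc0 : ∀ i, 0 ≤ c i)
    (hb : ∀ i, ∀ᵐ ω ∂μ, |Y i ω| ≤ c i) (hc : ∑ i, (c i)^2 ≤ 1)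
    {s : ℝ} (hs : 0 ≤ s) :
    μ {ω | s ≤ |∑ i, Y i ω|} ≤ ENNReal.ofReal (2 * Real.exp (-s^2/2)) := by
  have h1 := chernoff_sum hYm hindep hmean hc0 hb hc hs
  have hYm' : ∀ i, Measurable (fun ω => -(Y i ω)) := fun i => (hYm i).neg
  have hindep' : iIndepFun (fun i ω => -(Y i ω)) μ :=
    hindep.comp (fun _ => fun x : ℝ => -x) (fun _ => measurable_neg)
  have h2 := chernoff_sum hYm' hindep'
    (fun i => by rw [integral_neg, hmean i, neg_zero])
    hc0 (fun i => by filter_upwards [hb i] with ω h using by simpa using h) hc hs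
  have hsub : {ω | s ≤ |∑ i, Y i ω|} ⊆
      {ω | s ≤ ∑ i, Y i ω} ∪ {ω | s ≤ ∑ i, -(Y i ω)} := by
    intro ω hω
    simp only [Set.mem_setOf_eq] at hω ⊢
    rcases abs_cases (∑ i, Y i ω) with ⟨he, _⟩ | ⟨he, _⟩
    · left; rwa [he] at hω
    · right; show s ≤ ∑ i, -(Y i ω); rw [Finset.sum_neg_distrib]; rwa [he] at hω
  calc μ {ω | s ≤ |∑ i, Y i ω|} ≤ μ ({ω | s ≤ ∑ i, Y i ω} ∪ {ω | s ≤ ∑ i, -(Y i ω)}) :=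
        measure_mono hsub
    _ ≤ μ {ω | s ≤ ∑ i, Y i ω} + μ {ω | s ≤ ∑ i, -(Y i ω)} := measure_union_le _ _
    _ ≤ ENNReal.ofReal (Real.exp (-s^2/2)) + ENNReal.ofReal (Real.exp (-s^2/2)) := add_le_add h1 h2
    _ = ENNReal.ofReal (2 * Real.exp (-s^2/2)) := by
        rw [← ENNReal.ofReal_add (Real.exp_pos _).le (Real.exp_pos _).le]; ring_nf


lemma sep_card_le {d : ℕ} (N : Finset (EuclideanSpace ℝ (Fin d)))
    (h1 : ∀ y ∈ N, ‖y‖ = 1)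
    (hsep : ∀ y ∈ N, ∀ z ∈ N, y ≠ z → 1/16 ≤ ‖y - z‖) :
    N.card ≤ 33 ^ d := by
  set V := volume (ball (0 : EuclideanSpace ℝ (Fin d)) 1) with hV
  have hV0 : 0 < V := measure_ball_pos _ _ one_pos
  have hVt : V < ⊤ := measure_ball_lt_top
  have hdisj : (N : Set (EuclideanSpace ℝ (Fin d))).PairwiseDisjoint
      (fun y => ball y (1/32)) := by
    intro y hy z hz hyz
    apply ball_disjoint_ball
    rw [dist_eq_norm]
    calc (1:ℝ)/32 + 1/32 = 1/16 := by norm_num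
      _ ≤ ‖y - z‖ := hsep y hy z hz hyz
  have hunion : (⋃ y ∈ N, ball y (1/32)) ⊆ ball (0 : EuclideanSpace ℝ (Fin d)) (33/32) := by
    intro w hw
    simp only [Set.mem_iUnion] at hw
    obtain ⟨y, hy, hw⟩ := hw
    rw [mem_ball] at hw ⊢
    calc dist w 0 ≤ dist w y + dist y 0 := dist_triangle _ _ _
      _ < 1/32 + 1 := by
          apply add_lt_add_of_lt_of_le hw
          rw [dist_eq_norm, sub_zero]; exact (h1 y hy).le
      _ = 33/32 := by norm_num
  have hball : ∀ y : EuclideanSpace ℝ (Fin d), ∀ r : ℝ, 0 < r →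
      volume (ball y r) = ENNReal.ofReal (r ^ d) * V := by
    intro y r hr
    rw [hV, Measure.addHaar_ball_of_pos _ _ hr, finrank_euclideanSpace_fin]
  have hsum : (N.card : ℝ≥0∞) * (ENNReal.ofReal ((1/32:ℝ) ^ d) * V) ≤
      ENNReal.ofReal ((33/32:ℝ) ^ d) * V := by
    calc (N.card : ℝ≥0∞) * (ENNReal.ofReal ((1/32:ℝ) ^ d) * V)
        = ∑ y ∈ N, volume (ball y (1/32)) := by
          rw [Finset.sum_congr rfl (fun y _ => hball y (1/32) (by norm_num))]
          rw [Finset.sum_const, nsmul_eq_mul]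
      _ = volume (⋃ y ∈ N, ball y (1/32)) :=
          (measure_biUnion_finset hdisj (fun y _ => measurableSet_ball)).symm
      _ ≤ volume (ball (0 : EuclideanSpace ℝ (Fin d)) (33/32)) := measure_mono hunion
      _ = ENNReal.ofReal ((33/32:ℝ) ^ d) * V := hball _ _ (by norm_num)
  have hkey : (N.card : ℝ≥0∞) * ENNReal.ofReal ((1/32:ℝ) ^ d) ≤
      ENNReal.ofReal ((33/32:ℝ) ^ d) := by
    have h2 : (N.card : ℝ≥0∞) * (ENNReal.ofReal ((1/32:ℝ) ^ d) * V) =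
        (N.card : ℝ≥0∞) * ENNReal.ofReal ((1/32:ℝ) ^ d) * V := by ring
    rw [h2] at hsum
    exact (ENNReal.mul_le_mul_iff_left hV0.ne' hVt.ne).mp hsum
  have hreal : (N.card : ℝ) * (1/32:ℝ) ^ d ≤ (33/32:ℝ) ^ d := by
    have := hkey
    rw [← ENNReal.ofReal_natCast, ← ENNReal.ofReal_mul (by positivity)] at this
    exact (ENNReal.ofReal_le_ofReal_iff (by positivity)).mp this
  have : (N.card : ℝ) ≤ (33:ℝ) ^ d := by
    have h32 : (0:ℝ) < (1/32:ℝ)^d := by positivity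
    rw [← mul_le_mul_iff_of_pos_right h32]
    calc (N.card : ℝ) * (1/32)^d ≤ (33/32:ℝ)^d := hreal
      _ = 33^d * (1/32)^d := by rw [← mul_pow]; norm_num
  have h3 : (N.card : ℝ) ≤ ((33 ^ d : ℕ) : ℝ) := by push_cast; exact this
  exact_mod_cast h3

lemma sphere_net (d : ℕ) : ∃ N : Finset (EuclideanSpace ℝ (Fin d)),
    (∀ y ∈ N, ‖y‖ = 1) ∧ N.card ≤ 33 ^ d ∧
    ∀ x : EuclideanSpace ℝ (Fin d), ‖x‖ = 1 → ∃ y ∈ N, ‖x - y‖ ≤ 1/16 := by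
  set P : Finset (EuclideanSpace ℝ (Fin d)) → Prop := fun N =>
    (∀ y ∈ N, ‖y‖ = 1) ∧ ∀ y ∈ N, ∀ z ∈ N, y ≠ z → 1/16 ≤ ‖y - z‖ with hP
  have hcard : ∀ N, P N → N.card ≤ 33 ^ d := fun N h => sep_card_le N h.1 h.2
  set Q : ℕ → Prop := fun m => ∃ N, P N ∧ N.card = m with hQ
  have hQ0 : Q 0 := ⟨∅, ⟨by simp, by simp⟩, by simp⟩
  set m := Nat.findGreatest Q (33 ^ d) with hm
  have hQm : Q m := Nat.findGreatest_spec (Nat.zero_le _) hQ0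
  obtain ⟨N, hPN, hNcard⟩ := hQm
  have hNle : N.card ≤ 33 ^ d := hcard N hPN
  refine ⟨N, hPN.1, hNle, ?_⟩
  intro x hx
  by_contra hcon
  push_neg at hcon
  have hxN : x ∉ N := by
    intro hxN
    have := hcon x hxN
    simp at this
    linarith
  have hP' : P (insert x N) := by
    constructor
    · intro y hy
      rcases Finset.mem_insert.mp hy with rfl | hy
      · exact hx
      · exact hPN.1 y hy
    · intro y hy z hz hyz
      rcases Finset.mem_insert.mp hy with hy1 | hy1
      · rcases Finset.mem_insert.mp hz with hz1 | hz1
        · exact absurd (hy1.trans hz1.symm) hyz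
        · rw [hy1]; exact (hcon z hz1).le
      · rcases Finset.mem_insert.mp hz with hz1 | hz1
        · rw [hz1, norm_sub_rev]; exact (hcon y hy1).le
        · exact hPN.2 y hy1 z hz1 hyz
  have hle : (insert x N).card ≤ m := by
    apply Nat.le_findGreatest (hcard _ hP') ⟨_, hP', rfl⟩
  rw [Finset.card_insert_of_notMem hxN, hNcard] at hle
  omega


set_option maxHeartbeats 1000000

lemma inner_toEuclideanLin {p q : ℕ} (M : Matrix (Fin p) (Fin q) ℝ)
    (u : EuclideanSpace ℝ (Fin p)) (v : EuclideanSpace ℝ (Fin q)) :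
    ⟪u, Matrix.toEuclideanLin M v⟫ = ∑ r : Fin p × Fin q, u r.1 * v r.2 * M r.1 r.2 := by
  rw [PiLp.inner_apply]
  simp only [RCLike.inner_apply, conj_trivial]
  rw [Fintype.sum_prod_type]
  apply Finset.sum_congr rfl
  intro i _
  have : Matrix.toEuclideanLin M v i = ∑ j, M i j * v j := by
    rw [Matrix.toEuclideanLin_apply]
    rfl
  rw [this, Finset.sum_mul]
  apply Finset.sum_congr rfl
  intro j _
  ring

lemma specNorm_nonneg {p q : ℕ} (M : Matrix (Fin p) (Fin q) ℝ) : 0 ≤ specNorm M :=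
  norm_nonneg _

lemma norm_toEuclideanLin_le {p q : ℕ} (M : Matrix (Fin p) (Fin q) ℝ)
    (v : EuclideanSpace ℝ (Fin q)) :
    ‖Matrix.toEuclideanLin M v‖ ≤ specNorm M * ‖v‖ :=
  (LinearMap.toContinuousLinearMap (Matrix.toEuclideanLin M)).le_opNorm v

lemma net_bound {p q : ℕ} (M : Matrix (Fin p) (Fin q) ℝ)
    (Np : Finset (EuclideanSpace ℝ (Fin p))) (Nq : Finset (EuclideanSpace ℝ (Fin q)))
    (hNp1 : ∀ y ∈ Np, ‖y‖ = 1)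
    (hNp : ∀ x : EuclideanSpace ℝ (Fin p), ‖x‖ = 1 → ∃ y ∈ Np, ‖x - y‖ ≤ 1/16)
    (hNq : ∀ x : EuclideanSpace ℝ (Fin q), ‖x‖ = 1 → ∃ y ∈ Nq, ‖x - y‖ ≤ 1/16)
    {t : ℝ} (ht : 0 < t) (hM : t ≤ specNorm M) :
    ∃ u ∈ Np, ∃ v ∈ Nq, 7/8 * t ≤ |⟪u, Matrix.toEuclideanLin M v⟫| := by
  set T := LinearMap.toContinuousLinearMap (Matrix.toEuclideanLin M) with hT
  have hTnorm : specNorm M = ‖T‖ := rfl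
  -- T ≠ 0, get unit vectors
  have hT0 : T ≠ 0 := by
    intro h
    rw [hTnorm, h, norm_zero] at hM
    linarith
  obtain ⟨v', hv'⟩ : ∃ v', T v' ≠ 0 := by
    by_contra h
    push_neg at h
    exact hT0 (ContinuousLinearMap.ext (fun v => by rw [h v]; rfl))
  have hv'0 : v' ≠ 0 := fun h => hv' (by rw [h, map_zero])
  have hup : ∃ u₁ : EuclideanSpace ℝ (Fin p), ‖u₁‖ = 1 := by
    refine ⟨‖T v'‖⁻¹ • T v', ?_⟩
    rw [norm_smul, norm_inv, norm_norm, inv_mul_cancel₀ (norm_ne_zero_iff.mpr hv')]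
  have hvq : ∃ v₁ : EuclideanSpace ℝ (Fin q), ‖v₁‖ = 1 := by
    refine ⟨‖v'‖⁻¹ • v', ?_⟩
    rw [norm_smul, norm_inv, norm_norm, inv_mul_cancel₀ (norm_ne_zero_iff.mpr hv'0)]
  obtain ⟨u₁, hu₁⟩ := hup
  obtain ⟨v₁, hv₁⟩ := hvq
  obtain ⟨u₀', hu₀'N, _⟩ := hNp u₁ hu₁
  obtain ⟨v₀', hv₀'N, _⟩ := hNq v₁ hv₁
  have hprod : (Np ×ˢ Nq).Nonempty := ⟨(u₀', v₀'), Finset.mem_product.mpr ⟨hu₀'N, hv₀'N⟩⟩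
  set c : ℝ := (Np ×ˢ Nq).sup' hprod (fun z => |⟪z.1, T z.2⟫|) with hc
  have hc0 : 0 ≤ c := by
    obtain ⟨z, hz, hze⟩ := Finset.exists_mem_eq_sup' hprod (fun z => |⟪z.1, T z.2⟫|)
    rw [hc, hze]
    exact abs_nonneg _
  -- key bound
  have hkey : ‖T‖ ≤ c + ‖T‖ / 8 := by
    apply ContinuousLinearMap.opNorm_le_bound T (by positivity)
    intro v
    rcases eq_or_ne v 0 with rfl | hv
    · simp
    · have hvn : (0:ℝ) < ‖v‖ := norm_pos_iff.mpr hv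
      set w : EuclideanSpace ℝ (Fin q) := ‖v‖⁻¹ • v with hw
      have hwn : ‖w‖ = 1 := by
        rw [hw, norm_smul, norm_inv, norm_norm, inv_mul_cancel₀ hvn.ne']
      have hsuff : ‖T w‖ ≤ c + ‖T‖/8 := by
        rcases eq_or_ne (T w) 0 with h0 | h0
        · rw [h0, norm_zero]; positivity
        · have hTwn : (0:ℝ) < ‖T w‖ := norm_pos_iff.mpr h0
          set u : EuclideanSpace ℝ (Fin p) := ‖T w‖⁻¹ • T w with hu
          have hun : ‖u‖ = 1 := by
            rw [hu, norm_smul, norm_inv, norm_norm, inv_mul_cancel₀ hTwn.ne']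
          have hinner : ⟪u, T w⟫ = ‖T w‖ := by
            rw [hu, real_inner_smul_left, real_inner_self_eq_norm_sq]
            field_simp
          obtain ⟨u₀, hu₀N, hu₀⟩ := hNp u hun
          obtain ⟨v₀, hv₀N, hv₀⟩ := hNq w hwn
          have hu₀n : ‖u₀‖ ≤ 1 := (hNp1 u₀ hu₀N).le
          have e1 : ⟪u - u₀, T w⟫ = ⟪u, T w⟫ - ⟪u₀, T w⟫ := inner_sub_left _ _ _
          have e2 : ⟪u₀, T (w - v₀)⟫ = ⟪u₀, T w⟫ - ⟪u₀, T v₀⟫ := by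
            rw [map_sub, inner_sub_right]
          have hdecomp : ⟪u, T w⟫ =
              ⟪u₀, T v₀⟫ + ⟪u - u₀, T w⟫ + ⟪u₀, T (w - v₀)⟫ := by
            rw [e1, e2]; ring
          have hmem : ((u₀, v₀) : EuclideanSpace ℝ (Fin p) × EuclideanSpace ℝ (Fin q)) ∈ Np ×ˢ Nq :=
            Finset.mem_product.mpr ⟨hu₀N, hv₀N⟩
          have hb1 : ⟪u₀, T v₀⟫ ≤ c := by
            calc ⟪u₀, T v₀⟫ ≤ |⟪u₀, T v₀⟫| := le_abs_self _
              _ ≤ c := Finset.le_sup' (f := fun z : EuclideanSpace ℝ (Fin p) × EuclideanSpace ℝ (Fin q) => |⟪z.1, T z.2⟫|) hmem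
          have hb2 : ⟪u - u₀, T w⟫ ≤ ‖T‖ / 16 := by
            calc ⟪u - u₀, T w⟫ ≤ |⟪u - u₀, T w⟫| := le_abs_self _
              _ ≤ ‖u - u₀‖ * ‖T w‖ := abs_real_inner_le_norm _ _
              _ ≤ (1/16) * (‖T‖ * 1) := by
                  apply mul_le_mul hu₀ ?_ (norm_nonneg _) (by norm_num)
                  calc ‖T w‖ ≤ ‖T‖ * ‖w‖ := T.le_opNorm w
                    _ = ‖T‖ * 1 := by rw [hwn]
              _ = ‖T‖ / 16 := by ring
          have hb3 : ⟪u₀, T (w - v₀)⟫ ≤ ‖T‖ / 16 := by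
            calc ⟪u₀, T (w - v₀)⟫ ≤ |⟪u₀, T (w - v₀)⟫| := le_abs_self _
              _ ≤ ‖u₀‖ * ‖T (w - v₀)‖ := abs_real_inner_le_norm _ _
              _ ≤ 1 * (‖T‖ * (1/16)) := by
                  apply mul_le_mul hu₀n ?_ (norm_nonneg _) (by norm_num)
                  calc ‖T (w - v₀)‖ ≤ ‖T‖ * ‖w - v₀‖ := T.le_opNorm _
                    _ ≤ ‖T‖ * (1/16) := by gcongr
              _ = ‖T‖ / 16 := by ring
          have hTn0 : (0:ℝ) ≤ ‖T‖ := norm_nonneg _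
          calc ‖T w‖ = ⟪u, T w⟫ := hinner.symm
            _ ≤ c + ‖T‖/8 := by rw [hdecomp]; linarith [hb1, hb2, hb3]
      have hTv : T v = ‖v‖ • T w := by
        rw [hw, T.map_smul, smul_smul, mul_inv_cancel₀ hvn.ne', one_smul]
      calc ‖T v‖ = ‖v‖ * ‖T w‖ := by
            rw [hTv, norm_smul, Real.norm_eq_abs, abs_of_pos hvn]
        _ ≤ (c + ‖T‖/8) * ‖v‖ := by rw [mul_comm]; gcongr
  have hfinal : 7/8 * t ≤ c := by
    rw [hTnorm] at hM
    linarith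
  obtain ⟨z, hz, hze⟩ := Finset.exists_mem_eq_sup' hprod (fun z => |⟪z.1, T z.2⟫|)
  obtain ⟨hz1, hz2⟩ := Finset.mem_product.mp hz
  refine ⟨z.1, hz1, z.2, hz2, ?_⟩
  have : |⟪z.1, T z.2⟫| = |⟪z.1, Matrix.toEuclideanLin M z.2⟫| := rfl
  rw [hc, hze] at hfinal
  exact this ▸ hfinal


lemma sum_sq_of_unit {d : ℕ} (x : EuclideanSpace ℝ (Fin d)) (hx : ‖x‖ = 1) :
    ∑ i, (x i)^2 = 1 := by
  have h := hx
  rw [EuclideanSpace.norm_eq] at h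
  have h2 : ∑ i, ‖x i‖^2 = 1 := by
    have hnn : (0:ℝ) ≤ ∑ i, ‖x i‖^2 := by positivity
    rw [← Real.sq_sqrt hnn, h]; norm_num
  simpa [Real.norm_eq_abs, sq_abs] using h2

lemma specNorm_le_of_entries_le_one {p q : ℕ} (M : Matrix (Fin p) (Fin q) ℝ)
    (h : ∀ i j, |M i j| ≤ 1) {n : ℕ} (hp : p ≤ n) (hq : q ≤ n) :
    specNorm M ≤ n := by
  apply ContinuousLinearMap.opNorm_le_bound _ (Nat.cast_nonneg n)
  intro v
  set T := LinearMap.toContinuousLinearMap (Matrix.toEuclideanLin M) with hT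
  have happ : ∀ i, T v i = ∑ j, M i j * v j := by
    intro i
    show Matrix.toEuclideanLin M v i = _
    rw [Matrix.toEuclideanLin_apply]
    rfl
  have hv2 : ‖v‖^2 = ∑ j, (v j)^2 := by
    rw [EuclideanSpace.norm_eq, Real.sq_sqrt (by positivity)]
    simp [Real.norm_eq_abs, sq_abs]
  have hvnn : (0:ℝ) ≤ ∑ j, (v j)^2 := by positivity
  have hTv2 : ‖T v‖^2 = ∑ i, (T v i)^2 := by
    rw [EuclideanSpace.norm_eq, Real.sq_sqrt (by positivity)]
    simp [Real.norm_eq_abs, sq_abs]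
  have hsq : ‖T v‖^2 ≤ ((n:ℝ) * ‖v‖)^2 := by
    rw [hTv2]
    have hrow : ∀ i, (T v i)^2 ≤ (q:ℝ) * ∑ j, (v j)^2 := by
      intro i
      rw [happ i]
      calc (∑ j, M i j * v j)^2 ≤ (∑ j, (M i j)^2) * ∑ j, (v j)^2 :=
            Finset.sum_mul_sq_le_sq_mul_sq _ _ _
        _ ≤ (q:ℝ) * ∑ j, (v j)^2 := by
            apply mul_le_mul_of_nonneg_right _ hvnn
            calc ∑ j, (M i j)^2 ≤ ∑ _j : Fin q, (1:ℝ) := by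
                  apply Finset.sum_le_sum
                  intro j _
                  rw [← sq_abs]
                  nlinarith [h i j, abs_nonneg (M i j)]
              _ = (q:ℝ) := by simp
    calc ∑ i, (T v i)^2 ≤ ∑ _i : Fin p, (q:ℝ) * ∑ j, (v j)^2 :=
          Finset.sum_le_sum (fun i _ => hrow i)
      _ = (p:ℝ) * ((q:ℝ) * ∑ j, (v j)^2) := by rw [Finset.sum_const]; simp [nsmul_eq_mul]
      _ ≤ ((n:ℝ) * ‖v‖)^2 := by
          rw [mul_pow, hv2]
          have hpn : (p:ℝ) ≤ n := Nat.cast_le.mpr hp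
          have hqn : (q:ℝ) ≤ n := Nat.cast_le.mpr hq
          have hn0 : (0:ℝ) ≤ (n:ℝ) := by positivity
          have hp0 : (0:ℝ) ≤ (p:ℝ) := by positivity
          have hq0 : (0:ℝ) ≤ (q:ℝ) := by positivity
          nlinarith [hvnn, mul_le_mul_of_nonneg_right (mul_le_mul hpn hqn hq0 hn0) hvnn]
  have h1 := Real.sqrt_le_sqrt hsq
  rwa [Real.sqrt_sq (norm_nonneg _), Real.sqrt_sq (by positivity)] at h1

lemma exp17_lt : Real.exp 17 < 28000000 := by
  have h1 : Real.exp 17 = Real.exp 1 ^ (17:ℕ) := by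
    rw [← Real.exp_nat_mul]; norm_num
  have h2 : Real.exp 1 ^ (17:ℕ) < 2.7182818286 ^ (17:ℕ) := by
    apply pow_lt_pow_left₀ Real.exp_one_lt_d9 (Real.exp_pos 1).le (by norm_num)
  rw [h1]
  calc Real.exp 1 ^ (17:ℕ) < 2.7182818286 ^ (17:ℕ) := h2
    _ < 28000000 := by norm_num

lemma exp26_lt : Real.exp 26 < 198000000000 := by
  have h1 : Real.exp 26 = Real.exp 1 ^ (26:ℕ) := by
    rw [← Real.exp_nat_mul]; norm_num
  rw [h1]
  calc Real.exp 1 ^ (26:ℕ) < 2.7182818286 ^ (26:ℕ) := by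
        apply pow_lt_pow_left₀ Real.exp_one_lt_d9 (Real.exp_pos 1).le (by norm_num)
    _ < 198000000000 := by norm_num

lemma exp29_lt : Real.exp 29 < 7000000000000 := by
  have h1 : Real.exp 29 = Real.exp 1 ^ (29:ℕ) := by
    rw [← Real.exp_nat_mul]; norm_num
  rw [h1]
  calc Real.exp 1 ^ (29:ℕ) < 2.7182818286 ^ (29:ℕ) := by
        apply pow_lt_pow_left₀ Real.exp_one_lt_d9 (Real.exp_pos 1).le (by norm_num)
    _ < 7000000000000 := by norm_num

lemma exp10_lt : Real.exp 10 < 27000 := by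
  have h1 : Real.exp 10 = Real.exp 1 ^ (10:ℕ) := by
    rw [← Real.exp_nat_mul]; norm_num
  rw [h1]
  calc Real.exp 1 ^ (10:ℕ) < 2.7182818286 ^ (10:ℕ) := by
        apply pow_lt_pow_left₀ Real.exp_one_lt_d9 (Real.exp_pos 1).le (by norm_num)
    _ < 27000 := by norm_num

lemma exp7_gt : (1089:ℝ) < Real.exp 7 := by
  have h1 : Real.exp 7 = Real.exp 1 ^ (7:ℕ) := by
    rw [← Real.exp_nat_mul]; norm_num
  rw [h1]
  calc (1089:ℝ) < 2.7182818283 ^ (7:ℕ) := by norm_num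
    _ < Real.exp 1 ^ (7:ℕ) := by
        apply pow_lt_pow_left₀ Real.exp_one_gt_d9 (by norm_num) (by norm_num)

lemma small_case (n : ℕ) (hn : 2 ≤ n) (hsmall : n ≤ 30) : (n:ℝ) < 9 * Real.log n := by
  have hcast : (2:ℝ) ≤ n := by exact_mod_cast hn
  have hlogmono : ∀ a : ℕ, 0 < a → a ≤ n → Real.log a ≤ Real.log n := by
    intro a ha han
    apply Real.log_le_log (by exact_mod_cast ha) (by exact_mod_cast han)
  rcases le_or_gt n 6 with h6 | h6
  · have hmono2 := hlogmono 2 (by norm_num) hn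
    push_cast at hmono2
    have hl2 : (0.6931471803:ℝ) < Real.log 2 := Real.log_two_gt_d9
    have h6' : (n:ℝ) ≤ 6 := by exact_mod_cast h6
    nlinarith
  · rcases le_or_gt n 17 with h17 | h17
    · have h7 : Real.log 7 ≤ Real.log n := hlogmono 7 (by norm_num) h6
      have hl7 : (17:ℝ)/9 < Real.log 7 := by
        rw [Real.lt_log_iff_exp_lt (by norm_num)]
        have hp : Real.exp (17/9) ^ (9:ℕ) = Real.exp 17 := by
          rw [← Real.exp_nat_mul]; norm_num
        have : Real.exp (17/9) ^ (9:ℕ) < 7 ^ (9:ℕ) := by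
          rw [hp]; calc Real.exp 17 < 28000000 := exp17_lt
            _ < 7 ^ (9:ℕ) := by norm_num
        exact lt_of_pow_lt_pow_left₀ 9 (by norm_num) this
      have hn17 : (n:ℝ) ≤ 17 := by exact_mod_cast h17
      nlinarith
    · rcases le_or_gt n 26 with h26 | h26
      · have h18 : Real.log 18 ≤ Real.log n := hlogmono 18 (by omega) (by omega)
        have hl18 : (26:ℝ)/9 < Real.log 18 := by
          rw [Real.lt_log_iff_exp_lt (by norm_num)]
          have hp : Real.exp (26/9) ^ (9:ℕ) = Real.exp 26 := by
            rw [← Real.exp_nat_mul]; norm_num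
          have : Real.exp (26/9) ^ (9:ℕ) < 18 ^ (9:ℕ) := by
            rw [hp]; calc Real.exp 26 < 198000000000 := exp26_lt
              _ < 18 ^ (9:ℕ) := by norm_num
          exact lt_of_pow_lt_pow_left₀ 9 (by norm_num) this
        have hn26 : (n:ℝ) ≤ 26 := by exact_mod_cast h26
        nlinarith
      · rcases le_or_gt n 29 with h29 | h29
        · have h27 : Real.log 27 ≤ Real.log n := hlogmono 27 (by omega) (by omega)
          have hl27 : (29:ℝ)/9 < Real.log 27 := by
            rw [Real.lt_log_iff_exp_lt (by norm_num)]
            have hp : Real.exp (29/9) ^ (9:ℕ) = Real.exp 29 := by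
              rw [← Real.exp_nat_mul]; norm_num
            have : Real.exp (29/9) ^ (9:ℕ) < 27 ^ (9:ℕ) := by
              rw [hp]; calc Real.exp 29 < 7000000000000 := exp29_lt
                _ < 27 ^ (9:ℕ) := by norm_num
            exact lt_of_pow_lt_pow_left₀ 9 (by norm_num) this
          have hn29 : (n:ℝ) ≤ 29 := by exact_mod_cast h29
          nlinarith
        · have hn30 : n = 30 := by omega
          subst hn30
          have hl30 : (10:ℝ)/3 < Real.log 30 := by
            rw [Real.lt_log_iff_exp_lt (by norm_num)]
            have hp : Real.exp (10/3) ^ (3:ℕ) = Real.exp 10 := by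
              rw [← Real.exp_nat_mul]; norm_num
            have : Real.exp (10/3) ^ (3:ℕ) < 30 ^ (3:ℕ) := by
              rw [hp]; calc Real.exp 10 < 27000 := exp10_lt
                _ = 30 ^ (3:ℕ) := by norm_num
            exact lt_of_pow_lt_pow_left₀ 3 (by norm_num) this
          push_cast
          nlinarith


lemma numeric_main (n : ℕ) (hn : 31 ≤ n) :
    (33:ℝ)^(3*n) * (2 * Real.exp (-(441/128) * ((n:ℝ) * Real.log n))) ≤
      3 * (n:ℝ) ^ (-(7:ℝ)/2) := by
  have hn31 : (31:ℝ) ≤ n := by exact_mod_cast hn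
  have hn0 : (0:ℝ) < n := by linarith
  set L := Real.log n with hLdef
  have hL : (17:ℝ)/5 ≤ L := by
    have h31 : Real.log 31 ≤ L := Real.log_le_log (by norm_num) hn31
    have h175 : (17:ℝ)/5 ≤ Real.log 31 := by
      rw [Real.le_log_iff_exp_le (by norm_num)]
      apply le_of_pow_le_pow_left₀ (n := 5) (by norm_num) (by norm_num)
      have hp : Real.exp (17/5) ^ (5:ℕ) = Real.exp 17 := by
        rw [← Real.exp_nat_mul]; norm_num
      rw [hp]
      calc Real.exp 17 ≤ 28000000 := exp17_lt.le
        _ ≤ 31 ^ (5:ℕ) := by norm_num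
    linarith
  have hL0 : (0:ℝ) < L := by linarith
  have hlog33 : Real.log 33 ≤ 7/2 := by
    rw [Real.log_le_iff_le_exp (by norm_num)]
    apply le_of_pow_le_pow_left₀ (n := 2) (by norm_num) (Real.exp_pos _).le
    have hp : Real.exp (7/2) ^ (2:ℕ) = Real.exp 7 := by
      rw [← Real.exp_nat_mul]; norm_num
    rw [hp]
    calc ((33:ℝ)) ^ (2:ℕ) = 1089 := by norm_num
      _ ≤ Real.exp 7 := exp7_gt.le
  have hlog33nn : (0:ℝ) ≤ Real.log 33 := Real.log_nonneg (by norm_num)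
  have hlog2 : Real.log 2 ≤ 7/10 := by
    rw [Real.log_le_iff_le_exp (by norm_num)]
    apply le_of_pow_le_pow_left₀ (n := 10) (by norm_num) (Real.exp_pos _).le
    have hp : Real.exp (7/10) ^ (10:ℕ) = Real.exp 7 := by
      rw [← Real.exp_nat_mul]; norm_num
    rw [hp]
    calc ((2:ℝ)) ^ (10:ℕ) = 1024 := by norm_num
      _ ≤ Real.exp 7 := by linarith [exp7_gt]
  have hlog3 : (1:ℝ) ≤ Real.log 3 := by
    rw [Real.le_log_iff_exp_le (by norm_num)]
    linarith [Real.exp_one_lt_d9]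
  have lhs_eq : (33:ℝ)^(3*n) * (2 * Real.exp (-(441/128) * ((n:ℝ) * L))) =
      Real.exp (((3*n : ℕ):ℝ) * Real.log 33 + Real.log 2 + -(441/128) * ((n:ℝ) * L)) := by
    rw [Real.exp_add, Real.exp_add, Real.exp_nat_mul, Real.exp_log (by norm_num : (0:ℝ) < 33),
      Real.exp_log (by norm_num : (0:ℝ) < 2), mul_assoc]
  have rhs_eq : 3 * (n:ℝ) ^ (-(7:ℝ)/2) = Real.exp (Real.log 3 + L * (-(7:ℝ)/2)) := by
    rw [Real.exp_add, Real.exp_log (by norm_num : (0:ℝ) < 3), Real.rpow_def_of_pos hn0]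
  rw [lhs_eq, rhs_eq, Real.exp_le_exp]
  push_cast
  nlinarith [mul_le_mul_of_nonneg_left hlog33 (by positivity : (0:ℝ) ≤ 3*(n:ℝ)),
             mul_nonneg (sub_nonneg.mpr hn31) (sub_nonneg.mpr hL), hL0, hn31, hL]


end AuxiliaryLemmas

open scoped RealInnerProductSpace in
/-- Rectangular matrix Bernstein tail bound for a centered bounded random matrix. -/
theorem rectangular_bernstein_tail
    (Ωsp : Type) [MeasurableSpace Ωsp] (μ : Measure Ωsp) [IsProbabilityMeasure μ]
    (n p q : ℕ) (hn : 2 ≤ n) (hlog : 4 * Real.log n ≤ n)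
    (hp : p ≤ n) (hq : q ≤ n) (hpq : p + q ≤ 3 * n)
    (W : Ωsp → Matrix (Fin p) (Fin q) ℝ)
    (hmeas : ∀ i j, Measurable fun ω => W ω i j)
    (hindep : iIndepFun
      (fun (r : Fin p × Fin q) ω => W ω r.1 r.2) μ)
    (hmean : ∀ i j, ∫ ω, W ω i j ∂μ = 0)
    (hbdd : ∀ i j, ∀ᵐ ω ∂μ, |W ω i j| ≤ 1)
    (hvar : ∀ i j, ∫ ω, (W ω i j) ^ 2 ∂μ ≤ 1 / 4) :
    μ {ω | 3 * Real.sqrt ((n : ℝ) * Real.log n) ≤ specNorm (W ω)} ≤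
      ENNReal.ofReal (3 * (n : ℝ) ^ (-(7 : ℝ) / 2)) := by
  classical
  have hn2 : (2:ℝ) ≤ n := by exact_mod_cast hn
  have hn0 : (0:ℝ) < n := by linarith
  rcases le_or_gt n 30 with hsmall | hbig
  · -- for n ≤ 30 the event is a.s. empty
    have h9 : (n:ℝ) < 9 * Real.log n := small_case n hn hsmall
    have hL0 : (0:ℝ) < Real.log n := by nlinarith
    have hlt : (n:ℝ) < 3 * Real.sqrt ((n:ℝ) * Real.log n) := by
      have hsq : ((n:ℝ))^2 < (3 * Real.sqrt ((n:ℝ) * Real.log n))^2 := by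
        rw [mul_pow, Real.sq_sqrt (by positivity)]
        nlinarith
      exact lt_of_pow_lt_pow_left₀ 2 (by positivity) hsq
    have hball : ∀ᵐ ω ∂μ, ∀ i j, |W ω i j| ≤ 1 :=
      ae_all_iff.mpr fun i => ae_all_iff.mpr fun j => hbdd i j
    have hae : ∀ᵐ ω ∂μ, specNorm (W ω) ≤ (n:ℝ) := by
      filter_upwards [hball] with ω h
      exact specNorm_le_of_entries_le_one (W ω) h hp hq
    have hnull : μ {ω | 3 * Real.sqrt ((n : ℝ) * Real.log n) ≤ specNorm (W ω)} = 0 := by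
      apply measure_mono_null _ (ae_iff.mp hae)
      intro ω hω
      simp only [Set.mem_setOf_eq] at hω ⊢
      exact not_le.mpr (lt_of_lt_of_le hlt hω)
    rw [hnull]
    exact zero_le'
  · -- main case : n ≥ 31
    have hn31 : 31 ≤ n := by omega
    have hL0 : (0:ℝ) < Real.log n := Real.log_pos (by exact_mod_cast (by omega : 1 < n))
    have hnL0 : (0:ℝ) < (n:ℝ) * Real.log n := by positivity
    have ht₀ : (0:ℝ) < 3 * Real.sqrt ((n:ℝ) * Real.log n) := by
      have := Real.sqrt_pos.mpr hnL0
      linarith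
    obtain ⟨Np, hNp1, hNpcard, hNpcov⟩ := sphere_net p
    obtain ⟨Nq, hNq1, hNqcard, hNqcov⟩ := sphere_net q
    set s : ℝ := 7/8 * (3 * Real.sqrt ((n:ℝ) * Real.log n)) with hs
    have hs0 : (0:ℝ) ≤ s := by positivity
    have hsub : {ω | 3 * Real.sqrt ((n : ℝ) * Real.log n) ≤ specNorm (W ω)} ⊆
        ⋃ z ∈ (Np ×ˢ Nq),
          {ω | s ≤ |∑ r : Fin p × Fin q, z.1 r.1 * z.2 r.2 * W ω r.1 r.2|} := by
      intro ω hω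
      simp only [Set.mem_setOf_eq] at hω
      obtain ⟨u, hu, v, hv, hle⟩ := net_bound (W ω) Np Nq hNp1 hNpcov hNqcov ht₀ hω
      rw [inner_toEuclideanLin] at hle
      simp only [Set.mem_iUnion]
      exact ⟨(u, v), Finset.mem_product.mpr ⟨hu, hv⟩, hle⟩
    have heach : ∀ z ∈ Np ×ˢ Nq,
        μ {ω | s ≤ |∑ r : Fin p × Fin q, z.1 r.1 * z.2 r.2 * W ω r.1 r.2|} ≤
          ENNReal.ofReal (2 * Real.exp (-s^2/2)) := by
      intro z hz
      obtain ⟨hz1, hz2⟩ := Finset.mem_product.mp hz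
      have hYm : ∀ r : Fin p × Fin q, Measurable (fun ω => z.1 r.1 * z.2 r.2 * W ω r.1 r.2) :=
        fun r => (hmeas r.1 r.2).const_mul _
      have hYindep : iIndepFun
          (fun (r : Fin p × Fin q) ω => z.1 r.1 * z.2 r.2 * W ω r.1 r.2) μ :=
        hindep.comp (fun r (x:ℝ) => z.1 r.1 * z.2 r.2 * x) (fun r => measurable_const_mul _)
      apply chernoff_sum_abs hYm hYindep (c := fun r => |z.1 r.1 * z.2 r.2|)
      · intro r
        rw [integral_const_mul, hmean r.1 r.2, mul_zero]
      · intro r; exact abs_nonneg _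
      · intro r
        filter_upwards [hbdd r.1 r.2] with ω h
        rw [abs_mul]
        nlinarith [abs_nonneg (z.1 r.1 * z.2 r.2)]
      · have hu1 : ∑ i, (z.1 i)^2 = 1 := sum_sq_of_unit z.1 (hNp1 z.1 hz1)
        have hv1 : ∑ j, (z.2 j)^2 = 1 := sum_sq_of_unit z.2 (hNq1 z.2 hz2)
        have : ∑ r : Fin p × Fin q, |z.1 r.1 * z.2 r.2|^2
            = (∑ i, (z.1 i)^2) * (∑ j, (z.2 j)^2) := by
          rw [Finset.sum_mul_sum, Fintype.sum_prod_type]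
          apply Finset.sum_congr rfl; intro i _
          apply Finset.sum_congr rfl; intro j _
          rw [sq_abs, mul_pow]
        rw [this, hu1, hv1, one_mul]
      · exact hs0
    have hcardbound : ((Np ×ˢ Nq).card : ℝ) ≤ (33:ℝ)^(3*n) := by
      rw [Finset.card_product]
      have h1 : (Np.card : ℝ) * Nq.card ≤ ((33^p : ℕ) : ℝ) * ((33^q : ℕ) : ℝ) := by
        apply mul_le_mul (by exact_mod_cast hNpcard) (by exact_mod_cast hNqcard)
          (by positivity) (by positivity)
      push_cast at h1 ⊢
      calc (Np.card : ℝ) * Nq.card ≤ (33:ℝ)^p * 33^q := h1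
        _ = (33:ℝ)^(p+q) := by rw [pow_add]
        _ ≤ (33:ℝ)^(3*n) := by
            apply pow_le_pow_right₀ (by norm_num) hpq
    have hexp : -s^2/2 = -(441/128) * ((n:ℝ) * Real.log n) := by
      rw [hs, mul_pow, mul_pow, Real.sq_sqrt hnL0.le]
      ring
    calc μ {ω | 3 * Real.sqrt ((n : ℝ) * Real.log n) ≤ specNorm (W ω)}
        ≤ ∑ z ∈ Np ×ˢ Nq,
            μ {ω | s ≤ |∑ r : Fin p × Fin q, z.1 r.1 * z.2 r.2 * W ω r.1 r.2|} :=
          (measure_mono hsub).trans (measure_biUnion_finset_le _ _)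
      _ ≤ ∑ _z ∈ Np ×ˢ Nq, ENNReal.ofReal (2 * Real.exp (-s^2/2)) :=
          Finset.sum_le_sum heach
      _ = ((Np ×ˢ Nq).card : ℝ≥0∞) * ENNReal.ofReal (2 * Real.exp (-s^2/2)) := by
          rw [Finset.sum_const, nsmul_eq_mul]
      _ = ENNReal.ofReal (((Np ×ˢ Nq).card : ℝ) * (2 * Real.exp (-s^2/2))) := by
          rw [← ENNReal.ofReal_natCast, ← ENNReal.ofReal_mul (by positivity)]
      _ ≤ ENNReal.ofReal (3 * (n : ℝ) ^ (-(7 : ℝ) / 2)) := by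
          apply ENNReal.ofReal_le_ofReal
          calc ((Np ×ˢ Nq).card : ℝ) * (2 * Real.exp (-s^2/2))
              ≤ (33:ℝ)^(3*n) * (2 * Real.exp (-s^2/2)) := by
                apply mul_le_mul_of_nonneg_right hcardbound (by positivity)
            _ = (33:ℝ)^(3*n) * (2 * Real.exp (-(441/128) * ((n:ℝ) * Real.log n))) := by
                rw [hexp]
            _ ≤ 3 * (n : ℝ) ^ (-(7 : ℝ) / 2) := numeric_main n hn31
end
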